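/- Let H_w, H_u, H_x be complex Hilbert spaces, let F : H_u → H_x and G : H_w → H_x be bounded linear operators, and suppose J : H_u → H_u is a bounded linear operator inverting 1 + F*F. Set K₀ := −J F* G : H_w → H_u. Then for every bounded linear operator K : H_w → H_u and every w ∈ H_w, ‖F(K₀ w) + G w‖² + ‖K₀ w‖² ≤ ‖F(K w) + G w‖² + ‖K w‖². That is, in the Loewner order, T_{K₀}* T_{K₀} ≤ T_K* T_K for all K, where T_K = [FK + G; K]. -/
import Mathlib


open ContinuousLinearMap
open scoped ComplexInnerProductSpace

/-- The noncausal controller `K₀ = −(1 + F*F)⁻¹ F* G` minimizes `T_K* T_K` in the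
Loewner order: for every bounded controller `K` and every `w`,
`‖F(K₀ w) + G w‖² + ‖K₀ w‖² ≤ ‖F(K w) + G w‖² + ‖K w‖²`. -/
theorem stmt_5 {Hw Hu Hx : Type*}
    [NormedAddCommGroup Hw] [InnerProductSpace ℂ Hw] [CompleteSpace Hw]
    [NormedAddCommGroup Hu] [InnerProductSpace ℂ Hu] [CompleteSpace Hu]
    [NormedAddCommGroup Hx] [InnerProductSpace ℂ Hx] [CompleteSpace Hx]
    (F : Hu →L[ℂ] Hx) (G : Hw →L[ℂ] Hx) (J : Hu →L[ℂ] Hu)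
    (hJ₁ : J * (1 + adjoint F ∘L F) = 1) (hJ₂ : (1 + adjoint F ∘L F) * J = 1)
    (K₀ : Hw →L[ℂ] Hu) (hK₀ : K₀ = -(J ∘L (adjoint F ∘L G)))
    (K : Hw →L[ℂ] Hu) (w : Hw) :
    ‖F (K₀ w) + G w‖ ^ 2 + ‖K₀ w‖ ^ 2 ≤ ‖F (K w) + G w‖ ^ 2 + ‖K w‖ ^ 2 := by
  set a := J (adjoint F (G w)) with ha
  have hK₀w : K₀ w = -a := by rw [hK₀]; simp [ha]
  have h2 : a + adjoint F (F a) = adjoint F (G w) := by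
    have := congrArg (fun T : Hu →L[ℂ] Hu => T (adjoint F (G w))) hJ₂
    simpa [mul_apply, add_apply, one_apply, comp_apply] using this
  have hzero : adjoint F (F (K₀ w) + G w) + K₀ w = 0 := by
    rw [hK₀w]
    simp only [map_neg, map_add]
    rw [← h2]
    abel
  set d := K w - K₀ w with hd
  have hu : K w = d + K₀ w := by rw [hd]; abel
  have hx : F (K w) + G w = F d + (F (K₀ w) + G w) := by
    rw [hu, map_add]; abel
  rw [hx, hu, norm_add_sq (𝕜 := ℂ) (F d) (F (K₀ w) + G w), norm_add_sq (𝕜 := ℂ) d (K₀ w)]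
  have hcross : RCLike.re (⟪F d, F (K₀ w) + G w⟫) + RCLike.re (⟪d, K₀ w⟫) = 0 := by
    have h1 : ⟪F d, F (K₀ w) + G w⟫ = ⟪d, adjoint F (F (K₀ w) + G w)⟫ :=
      (adjoint_inner_right F _ _).symm
    rw [h1, ← map_add, ← inner_add_right, hzero, inner_zero_right, map_zero]
  nlinarith [sq_nonneg ‖F d‖, sq_nonneg ‖d‖, hcross]
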